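/- arXiv:2008.02240 — 3 statements merged into one kernel-verified Lean document; each statement's English description precedes it below -/
import Mathlib

section
/- The formal power series E(x) = (1 - x - sqrt(1 - 6x + 5x^2))/(2x(1-x)) (with the branch chosen so that E is a power series with E(0)=1) has nonnegative integer coefficients, and its coefficient of x^n equals the number of Schröder paths of semilength n avoiding the consecutive pattern UF. -/
open PowerSeries

inductive Step : Type
  | U | D | F
  deriving DecidableEq

def Step.len : Step → ℕ
  | .U => 1 | .D => 1 | .F => 2

def Step.alt : Step → ℤ
  | .U => 1 | .D => -1 | .F => 0

/-- Total length (x-displacement) of a path. -/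
def pathLen (w : List Step) : ℕ := (w.map Step.len).sum

/-- Final altitude (y-displacement) of a path. -/
def pathAlt (w : List Step) : ℤ := (w.map Step.alt).sum

/-- A Schröder path of semilength `n`: from (0,0) to (2n,0), never below the x-axis. -/
def IsSchroeder (n : ℕ) (w : List Step) : Prop :=
  pathLen w = 2 * n ∧ pathAlt w = 0 ∧ ∀ p : List Step, p <+: w → 0 ≤ pathAlt p

/-- `w` avoids the consecutive pattern `UF`. -/
def AvoidsUF (w : List Step) : Prop := ¬ ([Step.U, Step.F] <:+: w)

/-- Number of ascents: maximal nonempty runs of consecutive up-steps,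
counted via their last up-step. -/
def ascents (w : List Step) : ℕ :=
  (List.range w.length).countP
    (fun i => decide (w[i]? = some Step.U ∧ w[i+1]? ≠ some Step.U))

noncomputable def schroederCount (n : ℕ) : ℕ :=
  Nat.card {w : List Step // IsSchroeder n w}

noncomputable def schroederUFCount (n : ℕ) : ℕ :=
  Nat.card {w : List Step // IsSchroeder n w ∧ AvoidsUF w}

noncomputable def totalAscents (n : ℕ) : ℕ :=
  ∑ᶠ w ∈ {w : List Step | IsSchroeder n w}, ascents w

noncomputable def totalAscentsSq (n : ℕ) : ℕ :=
  ∑ᶠ w ∈ {w : List Step | IsSchroeder n w}, (ascents w) ^ 2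

noncomputable def ascCount (n k : ℕ) : ℕ :=
  Nat.card {w : List Step // IsSchroeder n w ∧ ascents w = k}

noncomputable def vv : PowerSeries (Polynomial ℚ) :=
  PowerSeries.C Polynomial.X


namespace SchAux
open List

@[simp] lemma pathLen_nil : pathLen [] = 0 := rfl
@[simp] lemma pathAlt_nil : pathAlt [] = 0 := rfl
@[simp] lemma pathLen_cons (c : Step) (w : List Step) : pathLen (c :: w) = c.len + pathLen w := by
  simp [pathLen]
@[simp] lemma pathAlt_cons (c : Step) (w : List Step) : pathAlt (c :: w) = c.alt + pathAlt w := by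
  simp [pathAlt]
@[simp] lemma pathLen_append (x y : List Step) : pathLen (x ++ y) = pathLen x + pathLen y := by
  simp [pathLen]
@[simp] lemma pathAlt_append (x y : List Step) : pathAlt (x ++ y) = pathAlt x + pathAlt y := by
  simp [pathAlt]

lemma even_sum (w : List Step) : Even ((pathLen w : ℤ) + pathAlt w) := by
  induction w with
  | nil => simp
  | cons c t ih =>
    have : ((pathLen (c :: t) : ℤ) + pathAlt (c :: t)) =
        ((c.len : ℤ) + c.alt) + ((pathLen t : ℤ) + pathAlt t) := by
      simp; ring
    rw [this]
    refine Even.add ?_ ih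
    cases c <;> decide

lemma even_len_of_alt_zero {w : List Step} (h : pathAlt w = 0) : ∃ m, pathLen w = 2 * m := by
  have := even_sum w
  rw [h, add_zero] at this
  have : Even (pathLen w) := by exact_mod_cast this
  obtain ⟨m, hm⟩ := this
  exact ⟨m, by omega⟩

lemma length_le_pathLen (w : List Step) : w.length ≤ pathLen w := by
  induction w with
  | nil => simp
  | cons c t ih => cases c <;> simp only [pathLen_cons, length_cons, Step.len] <;> omega

lemma pathLen_eq_zero {w : List Step} (h : pathLen w = 0) : w = [] := by
  cases w with
  | nil => rfl
  | cons c t =>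
    exfalso
    have h2 := length_le_pathLen (c :: t)
    rw [h] at h2
    simp at h2

lemma prefix_cons_iff' {p l : List Step} {a : Step} :
    p <+: (a :: l) ↔ p = [] ∨ ∃ q, q <+: l ∧ p = a :: q := by
  constructor
  · rintro ⟨t, ht⟩
    cases p with
    | nil => exact Or.inl rfl
    | cons b q => simp at ht; exact Or.inr ⟨q, ⟨t, ht.2⟩, by rw [ht.1]⟩
  · rintro (rfl | ⟨q, hq, rfl⟩)
    · exact List.nil_prefix
    · exact List.cons_prefix_cons.mpr ⟨rfl, hq⟩

lemma prefix_append_iff' {x y p : List Step} :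
    p <+: (x ++ y) ↔ p <+: x ∨ ∃ q, q <+: y ∧ p = x ++ q := by
  induction x generalizing p with
  | nil =>
    simp only [nil_append]
    constructor
    · intro h; exact Or.inr ⟨p, h, rfl⟩
    · rintro (h | ⟨q, hq, rfl⟩)
      · rw [List.prefix_nil.mp h]; exact List.nil_prefix
      · exact hq
  | cons a x ih =>
    rw [cons_append, prefix_cons_iff', prefix_cons_iff']
    constructor
    · rintro (rfl | ⟨q, hq, rfl⟩)
      · exact Or.inl (Or.inl rfl)
      · rcases ih.mp hq with h | ⟨r, hr, rfl⟩
        · exact Or.inl (Or.inr ⟨q, h, rfl⟩)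
        · exact Or.inr ⟨r, hr, rfl⟩
    · rintro ((rfl | ⟨q, hq, rfl⟩) | ⟨q, hq, rfl⟩)
      · exact Or.inl rfl
      · exact Or.inr ⟨q, ih.mpr (Or.inl hq), rfl⟩
      · exact Or.inr ⟨x ++ q, ih.mpr (Or.inr ⟨q, hq, rfl⟩), rfl⟩

/-- Nonnegative prefix condition -/
def NN (w : List Step) : Prop := ∀ p, p <+: w → 0 ≤ pathAlt p

end SchAux
namespace SchAux
open List

lemma NN_nil : NN [] := by intro p hp; rw [List.prefix_nil.mp hp]; simp

lemma NN_cons_F {w : List Step} : NN (Step.F :: w) ↔ NN w := by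
  constructor
  · intro h p hp
    have := h (Step.F :: p) (List.cons_prefix_cons.mpr ⟨rfl, hp⟩)
    simpa [Step.alt] using this
  · intro h p hp
    rcases prefix_cons_iff'.mp hp with rfl | ⟨q, hq, rfl⟩
    · simp
    · simpa [Step.alt] using h q hq

lemma NN_glue {w1 w2 : List Step} (h1 : NN w1) (e1 : pathAlt w1 = 0) (h2 : NN w2) :
    NN (Step.U :: (w1 ++ Step.D :: w2)) := by
  intro p hp
  rcases prefix_cons_iff'.mp hp with rfl | ⟨q, hq, rfl⟩
  · simp
  rcases prefix_append_iff'.mp hq with hq1 | ⟨r, hr, rfl⟩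
  · have := h1 q hq1
    simp [Step.alt]; omega
  rcases prefix_cons_iff'.mp hr with rfl | ⟨r', hr', rfl⟩
  · simp [Step.alt, e1]
  · have := h2 r' hr'
    simp [Step.alt, e1]; omega

/-- Existence of the first-return decomposition. -/
lemma exists_first_return {t : List Step} (ht : pathAlt t = -1)
    (hp : ∀ p, p <+: t → -1 ≤ pathAlt p) :
    ∃ w1 w2, t = w1 ++ Step.D :: w2 ∧ NN w1 ∧ pathAlt w1 = 0 ∧ NN w2 := by
  have hex : ∃ k, pathAlt (t.take k) = -1 := ⟨t.length, by simpa using ht⟩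
  classical
  obtain ⟨k, hkspec, hkmin⟩ : ∃ k, pathAlt (t.take k) = -1 ∧
      ∀ j, j < k → pathAlt (t.take j) ≠ -1 :=
    ⟨Nat.find hex, Nat.find_spec hex, fun j hj => Nat.find_min hex hj⟩
  have hk0 : k ≠ 0 := by
    intro h; rw [h] at hkspec; simp at hkspec
  obtain ⟨m, rfl⟩ : ∃ m, k = m + 1 := ⟨k - 1, by omega⟩
  have hkle : m + 1 ≤ t.length := by
    by_contra h
    push_neg at h
    rcases Nat.lt_or_ge t.length (m+1) with h' | h'
    · have h2 : pathAlt (t.take t.length) = -1 := by simpa using ht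
      exact hkmin t.length (by omega) h2
    · omega
  have htake_nonneg : ∀ j, j < m + 1 → 0 ≤ pathAlt (t.take j) := by
    intro j hj
    have h1 : -1 ≤ pathAlt (t.take j) := hp _ (t.take_prefix j)
    have h2 := hkmin j hj
    omega
  have hmlt : m < t.length := by omega
  have hsplit : t.take (m+1) = t.take m ++ [t[m]] := by
    rw [List.take_succ, List.getElem?_eq_getElem hmlt]
    rfl
  have h0 : 0 ≤ pathAlt (t.take m) := htake_nonneg _ (by omega)
  have haltm : pathAlt (t.take (m+1)) = pathAlt (t.take m) + (t[m]).alt := by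
    rw [hsplit, pathAlt_append, pathAlt_cons, pathAlt_nil, add_zero]
  rw [hkspec] at haltm
  have hgetD : t[m] = Step.D ∧ pathAlt (t.take m) = 0 := by
    cases hgd : t[m] <;> rw [hgd] at haltm <;> simp [Step.alt] at haltm <;>
      first | (exact ⟨rfl, by omega⟩) | omega
  refine ⟨t.take m, t.drop (m+1), ?_, ?_, hgetD.2, ?_⟩
  case _ =>
    calc t = t.take (m+1) ++ t.drop (m+1) := (List.take_append_drop (m+1) t).symm
    _ = t.take m ++ Step.D :: t.drop (m+1) := by rw [hsplit, hgetD.1]; simp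
  case _ =>
    intro p hpp
    have hple : p.length ≤ m := by
      have := hpp.length_le
      simp at this
      omega
    have hpe : p = t.take p.length := by
      have h1 : p = (t.take m).take p.length := List.prefix_iff_eq_take.mp hpp
      conv_lhs => rw [h1]
      rw [List.take_take, min_eq_left hple]
    have h2 : 0 ≤ pathAlt (t.take p.length) := htake_nonneg _ (by omega)
    exact le_of_le_of_eq h2 (congrArg pathAlt hpe).symm
  case _ =>
    intro p hpp
    obtain ⟨q, hq⟩ := hpp
    have hpre : t.take (m+1) ++ p <+: t := by
      refine ⟨q, ?_⟩
      rw [List.append_assoc, hq, List.take_append_drop]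
    have h1 := hp _ hpre
    simp [hkspec] at h1
    omega

/-- Uniqueness of the first-return decomposition (injectivity form). -/
lemma split_unique_aux {w1 w2 w1' w2' : List Step}
    (h : w1 ++ Step.D :: w2 = w1' ++ Step.D :: w2')
    (h1' : NN w1') (e1 : pathAlt w1 = 0) (hpre : w1 <+: w1') : w1 = w1' := by
  obtain ⟨r, hr⟩ := hpre
  cases r with
  | nil => simpa using hr
  | cons c r' =>
    exfalso
    rw [← hr, List.append_assoc] at h
    have := List.append_cancel_left h
    have hc : c = Step.D := by
      have := congrArg List.head? this
      simpa using this.symm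
    subst hc
    have : w1 ++ [Step.D] <+: w1' := by
      rw [← hr]
      refine ⟨r', by simp⟩
    have := h1' _ this
    simp [e1, Step.alt] at this
lemma split_unique {w1 w2 w1' w2' : List Step}
    (h : w1 ++ Step.D :: w2 = w1' ++ Step.D :: w2')
    (h1 : NN w1) (h1' : NN w1') (e1 : pathAlt w1 = 0) (e1' : pathAlt w1' = 0) :
    w1 = w1' ∧ w2 = w2' := by
  have hpre : w1 <+: w1' ∨ w1' <+: w1 := by
    have p1 : w1 <+: w1 ++ Step.D :: w2 := ⟨_, rfl⟩
    have p2 : w1' <+: w1 ++ Step.D :: w2 := h ▸ ⟨_, rfl⟩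
    exact List.prefix_or_prefix_of_prefix p1 p2
  have heq : w1 = w1' := by
    rcases hpre with hp | hp
    · exact split_unique_aux h h1' e1 hp
    · exact (split_unique_aux h.symm h1 e1' hp).symm
  subst heq
  exact ⟨rfl, by simpa using List.append_cancel_left h⟩

end SchAux
namespace SchAux
open List

lemma avoids_nil : AvoidsUF [] := by
  intro h
  have := h.length_le
  simp at this

lemma UF_prefix_iff {c : Step} {w : List Step} :
    [Step.U, Step.F] <+: c :: w ↔ c = Step.U ∧ w.head? = some Step.F := by
  constructor
  · intro h
    rw [show ([Step.U, Step.F] : List Step) = Step.U :: [Step.F] from rfl] at h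
    rw [List.cons_prefix_cons] at h
    refine ⟨h.1.symm, ?_⟩
    obtain ⟨t, ht⟩ := h.2
    cases w with
    | nil => simp at ht
    | cons d w' => simp at ht ⊢; exact ht.1.symm
  · rintro ⟨rfl, h⟩
    cases w with
    | nil => simp at h
    | cons d w' =>
      simp at h
      subst h
      exact ⟨w', rfl⟩

lemma avoids_cons {c : Step} {w : List Step} :
    AvoidsUF (c :: w) ↔ ¬(c = Step.U ∧ w.head? = some Step.F) ∧ AvoidsUF w := by
  unfold AvoidsUF
  rw [List.infix_cons_iff, UF_prefix_iff]
  tauto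

lemma avoids_singleton (c : Step) : AvoidsUF [c] := by
  rw [avoids_cons]
  exact ⟨by simp, avoids_nil⟩

lemma avoids_append {x y : List Step} :
    AvoidsUF (x ++ y) ↔
      AvoidsUF x ∧ AvoidsUF y ∧ ¬(x.getLast? = some Step.U ∧ y.head? = some Step.F) := by
  induction x with
  | nil => simp [avoids_nil]
  | cons c x ih =>
    cases x with
    | nil =>
      simp only [nil_append, cons_append, avoids_cons, avoids_singleton, ih]
      simp [avoids_nil, avoids_singleton]
      tauto
    | cons d x' =>
      rw [cons_append, avoids_cons, ih, List.getLast?_cons_cons,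
        show AvoidsUF (c :: d :: x') ↔ _ from avoids_cons]
      have h1 : (d :: x' ++ y).head? = some d := rfl
      have h2 : (d :: x').head? = some d := rfl
      rw [h1, h2]
      tauto

lemma avoids_cons_F {w : List Step} : AvoidsUF (Step.F :: w) ↔ AvoidsUF w := by
  rw [avoids_cons]
  simp

lemma avoids_glue {w1 w2 : List Step} :
    AvoidsUF (Step.U :: (w1 ++ Step.D :: w2)) ↔
      AvoidsUF w1 ∧ AvoidsUF w2 ∧ w1.head? ≠ some Step.F := by
  rw [avoids_cons, avoids_append, avoids_cons]
  cases w1 with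
  | nil => simp [avoids_nil]
  | cons c w1' => simp; tauto

end SchAux
instance : Fintype Step :=
  ⟨{Step.U, Step.D, Step.F}, by intro x; cases x <;> simp⟩

namespace SchAux
open List

lemma finite_sch (n : ℕ) (P : List Step → Prop) :
    Finite {w : List Step // IsSchroeder n w ∧ P w} := by
  have h : {w : List Step | IsSchroeder n w ∧ P w} ⊆ {l : List Step | l.length ≤ 2 * n} := by
    intro w hw
    have h1 := length_le_pathLen w
    have h2 := hw.1.1
    simp only [Set.mem_setOf_eq]
    omega
  exact ((List.finite_length_le Step (2*n)).subset h).to_subtype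

noncomputable def fc (n : ℕ) : ℕ := Nat.card {w : List Step // IsSchroeder n w ∧ AvoidsUF w}
noncomputable def gc (n : ℕ) : ℕ :=
  Nat.card {w : List Step // IsSchroeder n w ∧ (AvoidsUF w ∧ w.head? ≠ some Step.F)}

lemma sch_zero {w : List Step} : IsSchroeder 0 w ↔ w = [] := by
  constructor
  · intro h
    exact pathLen_eq_zero (by simpa using h.1)
  · rintro rfl
    refine ⟨by simp, by simp, ?_⟩
    intro p hp
    rw [List.prefix_nil.mp hp]
    simp

lemma fc_zero : fc 0 = 1 := by
  rw [fc, Nat.card_eq_one_iff_unique]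
  constructor
  · constructor
    intro a b
    apply Subtype.ext
    rw [sch_zero.mp a.2.1, sch_zero.mp b.2.1]
  · exact ⟨⟨[], sch_zero.mpr rfl, avoids_nil⟩⟩

lemma gc_zero : gc 0 = 1 := by
  rw [gc, Nat.card_eq_one_iff_unique]
  constructor
  · constructor
    intro a b
    apply Subtype.ext
    rw [sch_zero.mp a.2.1, sch_zero.mp b.2.1]
  · exact ⟨⟨[], sch_zero.mpr rfl, avoids_nil, by simp⟩⟩

lemma sch_cons_F {n : ℕ} {w : List Step} :
    IsSchroeder (n+1) (Step.F :: w) ↔ IsSchroeder n w := by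
  constructor
  · rintro ⟨h1, h2, h3⟩
    refine ⟨?_, ?_, ?_⟩
    · simp [Step.len] at h1; omega
    · simpa [Step.alt] using h2
    · exact NN_cons_F.mp h3
  · rintro ⟨h1, h2, h3⟩
    refine ⟨?_, ?_, NN_cons_F.mpr h3⟩
    · simp [Step.len, h1]; ring
    · simp [Step.alt, h2]

/-- `fc (n+1) = gc (n+1) + fc n` via peeling initial F. -/
lemma fc_succ_gc (n : ℕ) : fc (n+1) = gc (n+1) + fc n := by
  classical
  have := finite_sch (n+1) (fun w => AvoidsUF w ∧ w.head? ≠ some Step.F)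
  have := finite_sch n AvoidsUF
  have := finite_sch (n+1) AvoidsUF
  let ψ : {w : List Step // IsSchroeder (n+1) w ∧ (AvoidsUF w ∧ w.head? ≠ some Step.F)} ⊕
      {w : List Step // IsSchroeder n w ∧ AvoidsUF w} →
      {w : List Step // IsSchroeder (n+1) w ∧ AvoidsUF w} := fun x =>
    match x with
    | Sum.inl ⟨w, hw⟩ => ⟨w, hw.1, hw.2.1⟩
    | Sum.inr ⟨w, hw⟩ => ⟨Step.F :: w, sch_cons_F.mpr hw.1, avoids_cons_F.mpr hw.2⟩
  have hbij : Function.Bijective ψ := by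
    constructor
    · rintro (⟨w, hw⟩ | ⟨w, hw⟩) (⟨w', hw'⟩ | ⟨w', hw'⟩) h <;>
        simp only [ψ, Subtype.mk.injEq] at h
      · simp [h]
      · exact absurd (by rw [h]; rfl) hw.2.2
      · exact absurd (by rw [← h]; rfl) hw'.2.2
      · simp only [List.cons.injEq, true_and] at h
        simp [h]
    · rintro ⟨w, hw1, hw2⟩
      by_cases hF : w.head? = some Step.F
      · cases w with
        | nil => simp at hF
        | cons c t =>
          simp at hF
          subst hF
          exact ⟨Sum.inr ⟨t, sch_cons_F.mp hw1, avoids_cons_F.mp hw2⟩, rfl⟩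
      · exact ⟨Sum.inl ⟨w, hw1, hw2, hF⟩, rfl⟩
  have hcard := Nat.card_eq_of_bijective ψ hbij
  rw [Nat.card_sum] at hcard
  exact hcard.symm

end SchAux
namespace SchAux
open List

lemma NN_of_sch {n : ℕ} {w : List Step} (h : IsSchroeder n w) : NN w := h.2.2

lemma fc_succ (n : ℕ) :
    fc (n+1) = fc n + ∑ i ∈ Finset.range (n+1), gc i * fc (n - i) := by
  classical
  let A : ℕ → Type := fun k => {w : List Step // IsSchroeder k w ∧ AvoidsUF w}
  let B : ℕ → Type := fun k =>
    {w : List Step // IsSchroeder k w ∧ (AvoidsUF w ∧ w.head? ≠ some Step.F)}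
  haveI : ∀ k, Finite (A k) := fun k => finite_sch k _
  haveI : ∀ k, Finite (B k) := fun k => finite_sch k _
  let θ : A n ⊕ (Σ i : Fin (n+1), B i × A (n - i)) → A (n+1) := fun x =>
    match x with
    | Sum.inl ⟨w, hw⟩ => ⟨Step.F :: w, sch_cons_F.mpr hw.1, avoids_cons_F.mpr hw.2⟩
    | Sum.inr ⟨i, ⟨w1, hw1⟩, ⟨w2, hw2⟩⟩ =>
      ⟨Step.U :: (w1 ++ Step.D :: w2), by
        have hi : (i : ℕ) ≤ n := Nat.lt_succ_iff.mp i.isLt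
        have l1 := hw1.1.1
        have l2 := hw2.1.1
        have a1 := hw1.1.2.1
        have a2 := hw2.1.2.1
        refine ⟨?_, ?_, ?_⟩
        · simp only [pathLen_cons, pathLen_append, pathLen_cons, Step.len, l1, l2]
          omega
        · simp only [pathAlt_cons, pathAlt_append, pathAlt_cons, Step.alt, a1, a2]
          ring
        · exact NN_glue (NN_of_sch hw1.1) a1 (NN_of_sch hw2.1),
        avoids_glue.mpr ⟨hw1.2.1, hw2.2, hw1.2.2⟩⟩
  have hbij : Function.Bijective θ := by
    constructor
    · rintro (⟨w, hw⟩ | ⟨i, ⟨w1, hw1⟩, ⟨w2, hw2⟩⟩)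
        (⟨w', hw'⟩ | ⟨i', ⟨w1', hw1'⟩, ⟨w2', hw2'⟩⟩) h <;>
        simp only [θ, A, B, Subtype.mk.injEq, List.cons.injEq] at h
      · simp [h.2]
      · exact absurd h.1 (by simp)
      · exact absurd h.1 (by simp)
      · obtain ⟨-, h2⟩ := h
        obtain ⟨e1, e2⟩ := split_unique h2 (NN_of_sch hw1.1) (NN_of_sch hw1'.1)
          hw1.1.2.1 hw1'.1.2.1
        have hii : i = i' := by
          apply Fin.ext
          have k1 := hw1.1.1
          have k2 := hw1'.1.1
          rw [e1] at k1
          omega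
        subst hii
        subst e1
        subst e2
        rfl
    · rintro ⟨w, hw1, hw2⟩
      cases w with
      | nil =>
        exfalso
        have := hw1.1
        simp at this
      | cons c t =>
        cases c with
        | D =>
          exfalso
          have hpre : [Step.D] <+: Step.D :: t :=
            List.cons_prefix_cons.mpr ⟨rfl, List.nil_prefix⟩
          have := hw1.2.2 _ hpre
          simp [Step.alt] at this
        | F =>
          exact ⟨Sum.inl ⟨t, sch_cons_F.mp hw1, avoids_cons_F.mp hw2⟩, rfl⟩
        | U =>
          have ht : pathAlt t = -1 := by
            have := hw1.2.1
            simp [Step.alt] at this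
            omega
          have hp : ∀ p, p <+: t → -1 ≤ pathAlt p := by
            intro p hp
            have hpre : Step.U :: p <+: Step.U :: t := List.cons_prefix_cons.mpr ⟨rfl, hp⟩
            have := hw1.2.2 _ hpre
            simp [Step.alt] at this
            omega
          obtain ⟨w1, w2, heq, hnn1, he1, hnn2⟩ := exists_first_return ht hp
          subst heq
          have he2 : pathAlt w2 = 0 := by
            have := hw1.2.1
            simp [Step.alt, he1] at this
            omega
          obtain ⟨i, hi⟩ := even_len_of_alt_zero he1
          have hlen := hw1.1
          simp only [pathLen_cons, pathLen_append, pathLen_cons, Step.len] at hlen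
          have hiln : i ≤ n := by omega
          have hl2 : pathLen w2 = 2 * (n - i) := by omega
          obtain ⟨a1, a2, hne⟩ := avoids_glue.mp hw2
          exact ⟨Sum.inr ⟨⟨i, by omega⟩, ⟨w1, ⟨hi, he1, hnn1⟩, a1, hne⟩,
            ⟨w2, ⟨hl2, he2, hnn2⟩, a2⟩⟩, rfl⟩
  have hcard := Nat.card_eq_of_bijective θ hbij
  rw [Nat.card_sum] at hcard
  haveI : ∀ i : Fin (n+1), Fintype (B i × A (n - i)) := fun i => Fintype.ofFinite _
  have hsig : Nat.card (Σ i : Fin (n+1), B i × A (n - i)) =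
      ∑ i ∈ Finset.range (n+1), gc i * fc (n - i) := by
    rw [Nat.card_eq_fintype_card, Fintype.card_sigma]
    rw [← Fin.sum_univ_eq_sum_range (fun i => gc i * fc (n - i)) (n+1)]
    congr 1
    funext i
    rw [← Nat.card_eq_fintype_card, Nat.card_prod]
    rfl
  rw [hsig] at hcard
  exact hcard.symm

end SchAux
namespace SchAux
open Finset

lemma gc_cast (i : ℕ) : (gc i : ℚ) = fc i - (if i = 0 then 0 else (fc (i-1) : ℚ)) := by
  cases i with
  | zero => simp [gc_zero, fc_zero]
  | succ m =>
    have h := fc_succ_gc m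
    simp only [Nat.succ_ne_zero, if_false]
    push_cast [h]
    ring

lemma fc_key (n : ℕ) :
    (fc (n+1) : ℚ) = fc n + (∑ i ∈ range (n+1), (fc i : ℚ) * fc (n-i))
      - (∑ i ∈ range n, (fc i : ℚ) * fc (n-1-i)) := by
  have h := fc_succ n
  have hc : (fc (n+1) : ℚ) = fc n + ∑ i ∈ range (n+1), (gc i : ℚ) * fc (n - i) := by
    exact_mod_cast congrArg (Nat.cast : ℕ → ℚ) h
  rw [hc]
  have hsum : ∑ i ∈ range (n+1), (gc i : ℚ) * fc (n - i)
      = (∑ i ∈ range (n+1), (fc i : ℚ) * fc (n-i))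
        - (∑ i ∈ range (n+1), (if i = 0 then 0 else (fc (i-1) : ℚ)) * fc (n-i)) := by
    rw [← Finset.sum_sub_distrib]
    congr 1
    funext i
    rw [gc_cast]
    ring
  rw [hsum]
  have hshift : ∑ i ∈ range (n+1), (if i = 0 then 0 else (fc (i-1) : ℚ)) * fc (n-i)
      = ∑ i ∈ range n, (fc i : ℚ) * fc (n-1-i) := by
    rw [Finset.sum_range_succ' (fun i => (if i = 0 then (0:ℚ) else (fc (i-1) : ℚ)) * (fc (n-i) : ℚ)) n]
    simp only [Nat.succ_ne_zero, if_false, if_true, Nat.add_sub_cancel, zero_mul,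
      add_zero, ite_true]
    refine Finset.sum_congr rfl ?_
    intro i hi
    have h : n - (i+1) = n - 1 - i := by omega
    rw [h]
  rw [hshift]
  ring

end SchAux

theorem stmt1 (s E : PowerSeries ℚ)
    (hs : s ^ 2 = 1 - 6 * X + 5 * X ^ 2)
    (hs0 : constantCoeff s = 1)
    (hE : 2 * X * (1 - X) * E = 1 - X - s) :
    (∀ n : ℕ, ∃ m : ℕ, coeff n E = (m : ℚ)) ∧
      ∀ n : ℕ, coeff n E = (schroederUFCount n : ℚ) := by
  classical
  open SchAux Finset in
  have hfac : (4 : PowerSeries ℚ) * X * (1 - X) *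
      ((1 + X * ((1 - X) * E ^ 2)) - (1 - X) * E) = 0 := by
    linear_combination hs + (2*X*(1-X)*E - 1 + X - s) * hE
  have h4 : (4 : PowerSeries ℚ) ≠ 0 := by
    intro h
    have := congrArg (constantCoeff) h
    rw [map_ofNat, map_zero] at this
    norm_num at this
  have hX : (X : PowerSeries ℚ) ≠ 0 := X_ne_zero
  have h1X : (1 - X : PowerSeries ℚ) ≠ 0 := by
    intro h
    have := congrArg (constantCoeff) h
    simp at this
  have hquad : (1 + X * ((1 - X) * E ^ 2)) - (1 - X) * E = 0 := by
    rcases mul_eq_zero.mp hfac with h | h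
    · rcases mul_eq_zero.mp h with h' | h'
      · rcases mul_eq_zero.mp h' with h'' | h''
        exacts [absurd h'' h4, absurd h'' hX]
      · exact absurd h' h1X
    · exact h
  have hE' : E = 1 + X * E + X * E^2 - X * (X * E^2) := by linear_combination -hquad
  have h0 : (coeff 0) E = 1 := by
    rw [coeff_zero_eq_constantCoeff]
    have := congrArg (constantCoeff) hE'
    simpa using this
  have hrec : ∀ n : ℕ, (coeff (n+1)) E =
      (coeff n) E + (coeff n) (E^2) - (coeff n) (X * E^2) := by
    intro n
    conv_lhs => rw [hE']
    rw [map_sub, map_add, map_add, coeff_succ_X_mul, coeff_succ_X_mul, coeff_one]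
    simp
  have hsq : ∀ n : ℕ, (coeff n) (E^2) =
      ∑ i ∈ Finset.range (n+1), (coeff i) E * (coeff (n-i)) E := by
    intro n
    rw [pow_two, PowerSeries.coeff_mul, Finset.Nat.sum_antidiagonal_eq_sum_range_succ_mk]
  have main : ∀ n : ℕ, (coeff n) E = (SchAux.fc n : ℚ) := by
    intro n
    induction n using Nat.strong_induction_on with
    | _ n ih =>
      match n with
      | 0 => rw [h0, SchAux.fc_zero]; norm_num
      | (m+1) =>
        have hm : (coeff m) E = (SchAux.fc m : ℚ) := ih m (by omega)
        have hS : (coeff m) (E^2)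
            = ∑ i ∈ Finset.range (m+1), (SchAux.fc i : ℚ) * SchAux.fc (m-i) := by
          rw [hsq]
          refine Finset.sum_congr rfl ?_
          intro i hi
          simp only [Finset.mem_range] at hi
          rw [ih i (by omega), ih (m-i) (by omega)]
        have hS' : (coeff m) (X * E^2)
            = ∑ i ∈ Finset.range m, (SchAux.fc i : ℚ) * SchAux.fc (m-1-i) := by
          cases m with
          | zero =>
            rw [coeff_zero_eq_constantCoeff]
            simp
          | succ k =>
            rw [coeff_succ_X_mul, hsq k]
            refine Finset.sum_congr rfl ?_
            intro i hi
            simp only [Finset.mem_range] at hi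
            rw [ih i (by omega), ih (k-i) (by omega)]
            have h : k + 1 - 1 - i = k - i := by omega
            rw [h]
        rw [hrec m, hm, hS, hS', SchAux.fc_key m]
  have hcount : ∀ n, schroederUFCount n = SchAux.fc n := fun n => rfl
  constructor
  · intro n
    exact ⟨SchAux.fc n, main n⟩
  · intro n
    rw [main n, hcount n]
end

section
/- Let a_n = [x^n] (1 - 6x + x^2)^{-1/2}, where (1-6x+x^2)^{-1/2} is the formal power series with constant term 1 whose square times (1-6x+x^2) equals 1 (these are the central Delannoy numbers). Then a_n ~ (3 - sqrt(8))^{-n-1/2} (2 sqrt(8))^{-1/2} n^{-1/2} / sqrt(pi) as n → ∞. -/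
open PowerSeries

open Finset Real Filter Topology

noncomputable def cc (j : ℕ) : ℝ := (Nat.centralBinom j : ℝ) / 4 ^ j

lemma cc_zero : cc 0 = 1 := by simp [cc, Nat.centralBinom]

lemma cc_pos (j : ℕ) : 0 < cc j := by
  have h : (0:ℝ) < Nat.centralBinom j := by exact_mod_cast Nat.centralBinom_pos j
  have h4 : (0:ℝ) < 4 ^ j := by positivity
  exact div_pos h h4

lemma cc_rec (j : ℕ) : (2*(j:ℝ)+2) * cc (j+1) = (2*j+1) * cc j := by
  have h' : ((j:ℝ)+1) * Nat.centralBinom (j+1) = 2 * (2*j+1) * Nat.centralBinom j := by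
    exact_mod_cast Nat.succ_mul_centralBinom_succ j
  have key : (2*(j:ℝ)+2) * Nat.centralBinom (j+1) = 4*(2*j+1)*Nat.centralBinom j := by
    nlinarith [h']
  have h4 : (4:ℝ)^j ≠ 0 := by positivity
  unfold cc
  rw [pow_succ]
  field_simp
  have key2 : (2*(j:ℝ)+2) * Nat.centralBinom (j+1) * 4^j = 4*(2*j+1)*Nat.centralBinom j * 4^j := by
    rw [key]
  linarith [key2]

lemma cc_le_one (j : ℕ) : cc j ≤ 1 := by
  induction j with
  | zero => simp [cc_zero]
  | succ n ih =>
    have h := cc_rec n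
    have hp := cc_pos (n+1)
    nlinarith [cc_pos n]

lemma cc_sq_le (j : ℕ) : cc j ^ 2 * (2*(j:ℝ)+1) ≤ 1 := by
  induction j with
  | zero => simp [cc_zero]
  | succ n ih =>
    have h := cc_rec n
    have hsq : ((2*(n:ℝ)+2) * cc (n+1))^2 = ((2*(n:ℝ)+1) * cc n)^2 := by rw [h]
    have hp := cc_pos (n+1)
    have hp' := cc_pos n
    have key : cc (n+1)^2 * (2*(n:ℝ)+3) ≤ cc n ^2 * (2*n+1) := by
      nlinarith [sq_nonneg (cc n), sq_nonneg (cc (n+1))]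
    push_cast
    nlinarith [key]

noncomputable def SS (n : ℕ) : ℝ := ∑ j ∈ range (n+1), cc j * cc (n-j)
noncomputable def TT (n : ℕ) : ℝ := ∑ j ∈ range (n+1), (j:ℝ) * (cc j * cc (n-j))

lemma two_TT (n : ℕ) : 2 * TT n = n * SS n := by
  have hrefl : TT n = ∑ j ∈ range (n+1), ((n-j : ℕ):ℝ) * (cc (n-j) * cc (n-(n-j))) := by
    rw [TT, ← Finset.sum_range_reflect]
    apply Finset.sum_congr rfl
    intro j hj
    simp only [Finset.mem_range] at hj
    have hj' : j ≤ n := Nat.lt_succ_iff.mp hj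
    congr 1 <;> rw [Nat.sub_sub_self hj']
  have : TT n = ∑ j ∈ range (n+1), (((n:ℝ) - j)) * (cc j * cc (n-j)) := by
    rw [hrefl]
    apply Finset.sum_congr rfl
    intro j hj
    simp only [Finset.mem_range] at hj
    have hj' : j ≤ n := Nat.lt_succ_iff.mp hj
    rw [Nat.sub_sub_self hj', Nat.cast_sub hj']
    ring
  have hsum : TT n + (∑ j ∈ range (n+1), ((n:ℝ) - j) * (cc j * cc (n-j))) = (n:ℝ) * SS n := by
    rw [TT, SS, Finset.mul_sum, ← Finset.sum_add_distrib]
    apply Finset.sum_congr rfl; intros; ring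
  calc 2 * TT n = TT n + TT n := by ring
    _ = TT n + ∑ j ∈ range (n+1), ((n:ℝ) - j) * (cc j * cc (n-j)) := by rw [← this]
    _ = (n:ℝ) * SS n := hsum

lemma TT_succ (n : ℕ) : TT (n+1) = TT n + SS n / 2 := by
  have h0 : TT (n+1) = ∑ j ∈ range (n+1), ((j:ℝ)+1) * (cc (j+1) * cc (n-j)) := by
    rw [TT, Finset.sum_range_succ']
    simp only [Nat.cast_zero, zero_mul, add_zero]
    apply Finset.sum_congr rfl
    intro j hj
    push_cast
    congr 2
  have hterm : ∀ j : ℕ, ((j:ℝ)+1) * cc (j+1) = ((j:ℝ) + 1/2) * cc j := by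
    intro j
    have := cc_rec j
    linarith
  rw [h0, TT, SS]
  rw [Finset.sum_div, ← Finset.sum_add_distrib]
  apply Finset.sum_congr rfl
  intro j hj
  have : ((j:ℝ)+1) * (cc (j+1) * cc (n-j)) = (((j:ℝ)+1) * cc (j+1)) * cc (n-j) := by ring
  rw [this, hterm j]
  ring

lemma SS_eq_one (n : ℕ) : SS n = 1 := by
  induction n with
  | zero => simp [SS, cc_zero]
  | succ n ih =>
    have h1 := two_TT (n+1)
    have h2 := two_TT n
    have h3 := TT_succ n
    have hn : ((n:ℝ)+1) ≠ 0 := by positivity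
    have : ((n:ℝ)+1) * SS (n+1) = ((n:ℝ)+1) * SS n := by push_cast at h1; nlinarith
    rw [ih] at this
    field_simp at this
    linarith


lemma SS_one (n : ℕ) : ∑ j ∈ range (n+1), cc j * cc (n-j) = 1 := SS_eq_one n

noncomputable def BB (y : ℝ) : PowerSeries ℝ := PowerSeries.mk (fun j => cc j * y ^ j)

lemma BB_sq (y : ℝ) : (BB y) ^ 2 = PowerSeries.mk (fun n => y ^ n) := by
  ext n
  rw [sq, PowerSeries.coeff_mul, PowerSeries.coeff_mk,
    Finset.Nat.sum_antidiagonal_eq_sum_range_succ_mk]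
  have : ∀ k ∈ range (n+1), (coeff k) (BB y) * (coeff (n-k)) (BB y)
      = (cc k * cc (n-k)) * y ^ n := by
    intro k hk
    simp only [Finset.mem_range] at hk
    rw [BB, PowerSeries.coeff_mk, PowerSeries.coeff_mk]
    rw [show y ^ n = y ^ k * y ^ (n - k) by rw [← pow_add, Nat.add_sub_cancel' (Nat.lt_succ_iff.mp hk)]]
    ring
  rw [Finset.sum_congr rfl this, ← Finset.sum_mul, SS_one, one_mul]

lemma BB_sq_mul (y : ℝ) : (BB y) ^ 2 * (1 - PowerSeries.C y * X) = 1 := by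
  rw [BB_sq]
  ext n
  rw [mul_sub, mul_one, map_sub]
  cases n with
  | zero => simp
  | succ m =>
    have h1 : (coeff (m+1)) (PowerSeries.mk (fun n => y ^ n) * (PowerSeries.C y * X)) = y ^ m * y := by
      rw [show PowerSeries.mk (fun n : ℕ => y ^ n) * (PowerSeries.C y * X)
          = PowerSeries.mk (fun n : ℕ => y ^ n) * X * PowerSeries.C y by ring,
        PowerSeries.coeff_mul_C, PowerSeries.coeff_succ_mul_X, PowerSeries.coeff_mk]
    rw [h1, PowerSeries.coeff_mk]
    simp [pow_succ]

noncomputable def al : ℝ := 3 + Real.sqrt 8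
noncomputable def be : ℝ := 3 - Real.sqrt 8

lemma sqrt8_sq : Real.sqrt 8 ^ 2 = 8 := Real.sq_sqrt (by norm_num)
lemma sqrt8_lt : Real.sqrt 8 < 3 := by
  nlinarith [sqrt8_sq, Real.sqrt_nonneg 8]
lemma sqrt8_gt : (2.8:ℝ) < Real.sqrt 8 := by
  nlinarith [sqrt8_sq, Real.sqrt_nonneg 8]
lemma al_mul_be : al * be = 1 := by unfold al be; nlinarith [sqrt8_sq]
lemma al_add_be : al + be = 6 := by unfold al be; ring
lemma be_pos : 0 < be := by unfold be; linarith [sqrt8_lt]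
lemma al_pos : 0 < al := by unfold al; linarith [sqrt8_gt]

lemma factor_eq : (1 - PowerSeries.C al * X) * (1 - PowerSeries.C be * X)
    = 1 - 6 * X + X ^ 2 := by
  have h1 : PowerSeries.C al * PowerSeries.C be = 1 := by
    rw [← map_mul, al_mul_be, map_one]
  have h2 : PowerSeries.C al + PowerSeries.C be = 6 := by
    rw [← map_add, al_add_be, map_ofNat]
  calc (1 - PowerSeries.C al * X) * (1 - PowerSeries.C be * X)
      = 1 - (PowerSeries.C al + PowerSeries.C be) * X
        + (PowerSeries.C al * PowerSeries.C be) * X ^ 2 := by ring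
    _ = 1 - 6 * X + X ^ 2 := by rw [h1, h2, one_mul]

lemma AA_eq_a (s a : PowerSeries ℝ)
    (hs : s ^ 2 = 1 - 6 * X + X ^ 2)
    (hs0 : constantCoeff s = 1)
    (ha : s * a = 1) : a = BB al * BB be := by
  set A := BB al * BB be with hA
  have hA2 : A ^ 2 * (1 - 6 * X + X ^ 2) = 1 := by
    rw [← factor_eq, hA]
    calc (BB al * BB be) ^ 2 * ((1 - PowerSeries.C al * X) * (1 - PowerSeries.C be * X))
        = (BB al ^ 2 * (1 - PowerSeries.C al * X)) * (BB be ^ 2 * (1 - PowerSeries.C be * X)) := by ring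
      _ = 1 := by rw [BB_sq_mul, BB_sq_mul, one_mul]
  have hu2 : (s * A) ^ 2 = 1 := by
    calc (s * A) ^ 2 = s ^ 2 * A ^ 2 := by ring
      _ = A ^ 2 * (1 - 6 * X + X ^ 2) := by rw [hs]; ring
      _ = 1 := hA2
  have hu0 : constantCoeff (s * A) = 1 := by
    rw [map_mul, hs0, one_mul, hA, map_mul]
    simp [BB, PowerSeries.constantCoeff_mk, cc_zero]
  have hu : s * A = 1 := by
    have h := hu2
    have hfac : (s * A - 1) * (s * A + 1) = 0 := by ring_nf; linear_combination h
    rcases mul_eq_zero.mp hfac with h1 | h1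
    · exact sub_eq_zero.mp h1
    · exfalso
      have h2 := congrArg (constantCoeff) h1
      simp only [map_add, hu0, map_zero, map_one] at h2
      norm_num at h2
  have hsne : s ≠ 0 := by
    intro h; rw [h] at hs0; simp at hs0
  have : s * a = s * A := by rw [ha, hu]
  exact mul_left_cancel₀ hsne this


lemma cc_def (n : ℕ) : cc n = (Nat.centralBinom n : ℝ) / 4 ^ n := rfl

lemma aux_alg (C F F2 s P q4 : ℝ) (hs : 0 < s) (hP : 0 < P) (hF : 0 < F) (hq4 : 0 < q4)
    (hcb : C * (F*F) = F2) :
    (C/q4) * s = (F2 / (2*s*(q4*P^2))) / (F^2/(2*(s*s)*P^2)) := by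
  rw [div_div_div_eq]
  rw [← hcb]
  field_simp

lemma cc_sqrt_eq (n : ℕ) (hn : 1 ≤ n) :
    cc n * Real.sqrt n = Stirling.stirlingSeq (2*n) / Stirling.stirlingSeq n ^ 2 := by
  have hnR : (0:ℝ) < n := by exact_mod_cast hn
  have he : (0:ℝ) < Real.exp 1 := Real.exp_pos 1
  have hsn : 0 < Real.sqrt n := Real.sqrt_pos.mpr hnR
  have hsn2 : Real.sqrt n * Real.sqrt n = n := Real.mul_self_sqrt hnR.le
  set P : ℝ := ((n:ℝ)/Real.exp 1)^n with hPdef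
  have hP : (0:ℝ) < P := by positivity
  have hF : (0:ℝ) < (n.factorial : ℝ) := by exact_mod_cast Nat.factorial_pos n
  have hF2 : (0:ℝ) < ((2*n).factorial : ℝ) := by exact_mod_cast Nat.factorial_pos (2*n)
  have hcbN : n.centralBinom * (n.factorial * n.factorial) = (2*n).factorial := by
    have h := Nat.choose_mul_factorial_mul_factorial (Nat.le_mul_of_pos_left n (by norm_num) : n ≤ 2*n)
    rw [show 2*n - n = n by omega] at h
    rw [Nat.centralBinom, ← mul_assoc]
    exact h
  have hcb : (Nat.centralBinom n : ℝ) * ((n.factorial : ℝ) * (n.factorial : ℝ)) = ((2*n).factorial : ℝ) := by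
    exact_mod_cast hcbN
  have hsqrt4 : Real.sqrt (2*((2*n:ℕ):ℝ)) = 2 * Real.sqrt n := by
    push_cast
    rw [show 2*(2*(n:ℝ)) = 4 * n by ring, Real.sqrt_mul (by norm_num) (n:ℝ),
      show (4:ℝ) = 2^2 by norm_num, Real.sqrt_sq (by norm_num)]
  have hpow : (((2*n:ℕ):ℝ)/Real.exp 1)^(2*n) = 4^n * P^2 := by
    rw [pow_mul, show (((2*n:ℕ):ℝ)/Real.exp 1)^2 = 4*(((n:ℝ)/Real.exp 1)^2) by push_cast; ring,
      mul_pow, hPdef, ← pow_right_comm]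
  have h2 : Real.sqrt (2*(n:ℝ)) ^ 2 = 2*n := Real.sq_sqrt (by positivity)
  have e1 : Stirling.stirlingSeq (2*n) = ((2*n).factorial : ℝ) / (2*Real.sqrt n * (4^n * P^2)) := by
    rw [Stirling.stirlingSeq, hsqrt4, hpow]
  have e2 : Stirling.stirlingSeq n ^ 2 = (n.factorial : ℝ)^2 / (2*(Real.sqrt n * Real.sqrt n) * P^2) := by
    rw [Stirling.stirlingSeq, div_pow, mul_pow, h2, hsn2]
  rw [e1, e2, cc_def]
  exact aux_alg _ _ _ _ _ _ hsn hP hF (by positivity) hcb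


lemma cc_sqrt_tendsto : Filter.Tendsto (fun n : ℕ => cc n * Real.sqrt n) Filter.atTop (nhds (1/Real.sqrt π)) := by
  have h2n : Filter.Tendsto (fun n : ℕ => 2*n) Filter.atTop Filter.atTop :=
    Filter.tendsto_atTop_mono (fun n => (Nat.le_mul_of_pos_left n (by norm_num) : id n ≤ 2*n)) Filter.tendsto_id
  have hA : Filter.Tendsto (fun n : ℕ => Stirling.stirlingSeq (2*n)) Filter.atTop (nhds (Real.sqrt π)) :=
    Stirling.tendsto_stirlingSeq_sqrt_pi.comp h2n
  have hB : Filter.Tendsto (fun n : ℕ => Stirling.stirlingSeq n ^ 2) Filter.atTop (nhds (Real.sqrt π ^ 2)) :=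
    Stirling.tendsto_stirlingSeq_sqrt_pi.pow 2
  have hπ : (0:ℝ) < Real.sqrt π := Real.sqrt_pos.mpr Real.pi_pos
  have hdiv := hA.div hB (by positivity)
  rw [show Real.sqrt π / Real.sqrt π ^2 = 1/Real.sqrt π by field_simp] at hdiv
  apply Filter.Tendsto.congr' _ hdiv
  filter_upwards [Filter.eventually_ge_atTop 1] with n hn
  exact (cc_sqrt_eq n hn).symm

noncomputable def bnd (q : ℝ) (k : ℕ) : ℝ := (Real.sqrt π * Real.sqrt (2*k+2) + Real.sqrt π) * q ^ k

lemma bnd_nonneg (q : ℝ) (hq0 : 0 < q) (k : ℕ) : 0 ≤ bnd q k := by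
  have h1 := Real.sqrt_nonneg π
  have h2 := Real.sqrt_nonneg (2*(k:ℝ)+2)
  have : (0:ℝ) ≤ q ^ k := by positivity
  unfold bnd; positivity

lemma bnd_summable {q : ℝ} (hq0 : 0 < q) (hq1 : q < 1) : Summable (bnd q) := by
  have hg : Summable (fun k : ℕ => q ^ k) := summable_geometric_of_lt_one hq0.le hq1
  have hk : Summable (fun k : ℕ => (k:ℝ) * q ^ k) := by
    have := summable_pow_mul_geometric_of_norm_lt_one (R := ℝ) 1 (r := q)
      (by rw [Real.norm_eq_abs, abs_of_pos hq0]; exact hq1)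
    simpa using this
  have h1 : Summable (fun k : ℕ => Real.sqrt π * (2*((k:ℝ) * q^k) + 3*q^k)) :=
    (((hk.mul_left 2).add (hg.mul_left 3)).mul_left _)
  apply Summable.of_nonneg_of_le (bnd_nonneg q hq0) _ h1
  intro k
  have hs : Real.sqrt (2*(k:ℝ)+2) ≤ 2*(k:ℝ)+2 := by
    rw [Real.sqrt_le_iff]
    constructor
    · positivity
    · nlinarith [Nat.cast_nonneg (α:=ℝ) k]
  have hπ := Real.sqrt_nonneg π
  have hqk : (0:ℝ) ≤ q ^ k := by positivity
  calc bnd q k ≤ (Real.sqrt π * (2*(k:ℝ)+2) + Real.sqrt π) * q ^ k := by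
        unfold bnd; apply mul_le_mul_of_nonneg_right _ hqk; nlinarith
    _ = Real.sqrt π * (2*((k:ℝ) * q^k) + 3*q^k) := by ring

noncomputable def FF (q : ℝ) (n k : ℕ) : ℝ :=
  if k ≤ n then cc k * q^k * (cc (n-k) * Real.sqrt (π*n)) else 0

lemma sqrtpin (n : ℕ) : Real.sqrt (π * n) = Real.sqrt π * Real.sqrt n :=
  Real.sqrt_mul Real.pi_pos.le _

lemma ccm_sqrt_le (m n : ℕ) (hnm : (n:ℝ) ≤ 2*m+1) : cc m * Real.sqrt n ≤ 1 := by
  have hsq : Real.sqrt (n:ℝ) ^ 2 = n := Real.sq_sqrt (Nat.cast_nonneg n)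
  have h2 := cc_sq_le m
  have h3 : cc m ^ 2 * (n:ℝ) ≤ cc m ^2 * (2*m+1) :=
    mul_le_mul_of_nonneg_left hnm (sq_nonneg (cc m))
  have h1 : (cc m * Real.sqrt n)^2 ≤ 1 := by
    calc (cc m * Real.sqrt n)^2 = cc m ^2 * ((n:ℝ)) := by rw [mul_pow, hsq]
      _ ≤ 1 := le_trans h3 h2
  nlinarith [h1, sq_nonneg (cc m * Real.sqrt n - 1),
    mul_nonneg (cc_pos m).le (Real.sqrt_nonneg (n:ℝ))]

lemma FF_nonneg {q : ℝ} (hq0 : 0 < q) (n k : ℕ) : 0 ≤ FF q n k := by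
  unfold FF
  split
  · have h1 := (cc_pos k).le; have h2 := (cc_pos (n-k)).le
    have h3 : (0:ℝ) ≤ q ^ k := by positivity
    have h4 := Real.sqrt_nonneg (π * (n:ℝ))
    positivity
  · exact le_refl _

lemma FF_le_bnd {q : ℝ} (hq0 : 0 < q) (hq1 : q < 1) (n k : ℕ) : |FF q n k| ≤ bnd q k := by
  rw [abs_of_nonneg (FF_nonneg hq0 n k)]
  unfold FF
  split
  case isTrue hkn =>
    rw [sqrtpin]
    have hqk : (0:ℝ) < q ^ k := by positivity
    have hπ := Real.sqrt_nonneg π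
    have hck := cc_pos k
    have hck1 := cc_le_one k
    have hcm := (cc_pos (n-k)).le
    have hcm1 := cc_le_one (n-k)
    have hsn := Real.sqrt_nonneg (n:ℝ)
    have hcs : 0 ≤ cc (n-k) * Real.sqrt n := mul_nonneg hcm hsn
    rcases le_or_gt (n:ℝ) (2*(k:ℝ)+2) with hcase | hcase
    · have h1 : Real.sqrt (n:ℝ) ≤ Real.sqrt (2*(k:ℝ)+2) := Real.sqrt_le_sqrt hcase
      have hA : cc (n-k) * Real.sqrt n ≤ Real.sqrt (2*(k:ℝ)+2) :=
        le_trans (mul_le_of_le_one_left hsn hcm1) h1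
      have hB : cc k * q^k * (cc (n-k) * (Real.sqrt π * Real.sqrt n))
          ≤ q^k * (Real.sqrt π * Real.sqrt (2*(k:ℝ)+2)) := by
        calc cc k * q^k * (cc (n-k) * (Real.sqrt π * Real.sqrt n))
            = (q^k * Real.sqrt π) * (cc k * (cc (n-k) * Real.sqrt n)) := by ring
          _ ≤ (q^k * Real.sqrt π) * (cc (n-k) * Real.sqrt n) :=
              mul_le_mul_of_nonneg_left (mul_le_of_le_one_left hcs hck1) (by positivity)
          _ ≤ (q^k * Real.sqrt π) * Real.sqrt (2*(k:ℝ)+2) :=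
              mul_le_mul_of_nonneg_left hA (by positivity)
          _ = q^k * (Real.sqrt π * Real.sqrt (2*(k:ℝ)+2)) := by ring
      unfold bnd
      nlinarith [mul_nonneg hπ hqk.le]
    · have hnm : (n:ℝ) ≤ 2*((n-k:ℕ):ℝ)+1 := by
        have hkn' : (k:ℕ) ≤ n := hkn
        rw [Nat.cast_sub hkn']
        linarith [Nat.cast_nonneg (α := ℝ) k]
      have h1 : cc (n-k) * Real.sqrt n ≤ 1 := ccm_sqrt_le (n-k) n hnm
      have hB : cc k * q^k * (cc (n-k) * (Real.sqrt π * Real.sqrt n)) ≤ q^k * Real.sqrt π := by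
        calc cc k * q^k * (cc (n-k) * (Real.sqrt π * Real.sqrt n))
            = (q^k * Real.sqrt π) * (cc k * (cc (n-k) * Real.sqrt n)) := by ring
          _ ≤ (q^k * Real.sqrt π) * 1 :=
              mul_le_mul_of_nonneg_left (mul_le_one₀ hck1 hcs h1) (by positivity)
          _ = q^k * Real.sqrt π := by ring
      unfold bnd
      nlinarith [mul_nonneg (mul_nonneg hπ (Real.sqrt_nonneg (2*(k:ℝ)+2))) hqk.le]
  case isFalse => exact bnd_nonneg q hq0 k

lemma FF_tendsto {q : ℝ} (hq0 : 0 < q) (hq1 : q < 1) (k : ℕ) :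
    Tendsto (fun n => FF q n k) atTop (𝓝 (cc k * q ^ k)) := by
  have hC : Tendsto (fun n : ℕ => ((n-k:ℕ):ℝ)) atTop atTop :=
    tendsto_natCast_atTop_atTop.comp (tendsto_sub_atTop_nat k)
  have hA : Tendsto (fun n : ℕ => cc (n-k) * Real.sqrt ((n-k : ℕ))) atTop (𝓝 (1/Real.sqrt π)) :=
    cc_sqrt_tendsto.comp (tendsto_sub_atTop_nat k)
  have hB0 : Tendsto (fun n : ℕ => 1 + (k:ℝ)/((n-k:ℕ):ℝ)) atTop (𝓝 1) := by
    have h0 : Tendsto (fun n : ℕ => (k:ℝ)/((n-k:ℕ):ℝ)) atTop (𝓝 0) := by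
      simpa [div_eq_mul_inv] using hC.inv_tendsto_atTop.const_mul (k:ℝ)
    simpa using tendsto_const_nhds.add h0
  have hB : Tendsto (fun n : ℕ => Real.sqrt ((n:ℝ)/((n-k:ℕ):ℝ))) atTop (𝓝 1) := by
    have hcont : Tendsto Real.sqrt (𝓝 1) (𝓝 1) := by
      simpa [Real.sqrt_one] using (Real.continuous_sqrt.tendsto 1)
    apply Tendsto.congr' _ (hcont.comp hB0)
    filter_upwards [eventually_ge_atTop (k+1)] with n hn
    have hk : k ≤ n := by omega
    have hpos : (0:ℝ) < ((n-k:ℕ):ℝ) := by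
      have : 1 ≤ n - k := by omega
      exact_mod_cast Nat.lt_of_lt_of_le Nat.zero_lt_one this
    have hcast : ((n-k:ℕ):ℝ) = (n:ℝ) - k := by rw [Nat.cast_sub hk]
    simp only [Function.comp]
    congr 1
    rw [hcast]
    have hne : (n:ℝ) - k ≠ 0 := by rw [← hcast]; exact ne_of_gt hpos
    field_simp
    ring
  have key : Tendsto (fun n : ℕ => cc (n-k) * Real.sqrt (π * n)) atTop (𝓝 1) := by
    have hprod : Tendsto (fun n : ℕ =>
        Real.sqrt π * (cc (n-k) * Real.sqrt ((n-k : ℕ))) * Real.sqrt ((n:ℝ)/((n-k:ℕ):ℝ)))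
        atTop (𝓝 (Real.sqrt π * (1/Real.sqrt π) * 1)) :=
      ((tendsto_const_nhds.mul hA).mul hB)
    have hπ : Real.sqrt π ≠ 0 := ne_of_gt (Real.sqrt_pos.mpr Real.pi_pos)
    rw [show Real.sqrt π * (1/Real.sqrt π) * 1 = 1 by field_simp] at hprod
    apply Tendsto.congr' _ hprod
    filter_upwards [eventually_ge_atTop (k+1)] with n hn
    have hk : k ≤ n := by omega
    have hpos : (0:ℝ) < ((n-k:ℕ):ℝ) := by
      have : 1 ≤ n - k := by omega
      exact_mod_cast Nat.lt_of_lt_of_le Nat.zero_lt_one this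
    have hs : Real.sqrt ((n-k:ℕ):ℝ) ≠ 0 := ne_of_gt (Real.sqrt_pos.mpr hpos)
    rw [Real.sqrt_div (Nat.cast_nonneg n), sqrtpin, Nat.cast_sub hk] at *
    field_simp
  have hfin : Tendsto (fun n : ℕ => cc k * q^k * (cc (n-k) * Real.sqrt (π * n)))
      atTop (𝓝 (cc k * q^k * 1)) := tendsto_const_nhds.mul key
  rw [mul_one] at hfin
  apply Tendsto.congr' _ hfin
  filter_upwards [eventually_ge_atTop k] with n hn
  rw [FF, if_pos hn]


lemma g_summable {q : ℝ} (hq0 : 0 < q) (hq1 : q < 1) : Summable (fun k : ℕ => cc k * q ^ k) := by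
  apply Summable.of_nonneg_of_le (fun k => mul_nonneg (cc_pos k).le (by positivity)) _
    (summable_geometric_of_lt_one hq0.le hq1)
  intro k
  have := cc_le_one k
  have : (0:ℝ) ≤ q^k := by positivity
  nlinarith [cc_le_one k, cc_pos k]

lemma g_norm_summable {q : ℝ} (hq0 : 0 < q) (hq1 : q < 1) :
    Summable (fun k : ℕ => ‖cc k * q ^ k‖) := by
  have h := g_summable hq0 hq1
  apply h.congr
  intro k
  rw [Real.norm_eq_abs, abs_of_nonneg (mul_nonneg (cc_pos k).le (by positivity))]

lemma L_sq {q : ℝ} (hq0 : 0 < q) (hq1 : q < 1) :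
    (∑' k : ℕ, cc k * q ^ k) ^ 2 = (1-q)⁻¹ := by
  rw [sq, tsum_mul_tsum_eq_tsum_sum_range_of_summable_norm (g_norm_summable hq0 hq1)
    (g_norm_summable hq0 hq1)]
  have hterm : ∀ n : ℕ, ∑ k ∈ range (n+1), (cc k * q^k) * (cc (n-k) * q^(n-k)) = q ^ n := by
    intro n
    have : ∀ k ∈ range (n+1), (cc k * q^k) * (cc (n-k) * q^(n-k)) = (cc k * cc (n-k)) * q^n := by
      intro k hk
      simp only [Finset.mem_range] at hk
      rw [show q ^ n = q ^ k * q ^ (n - k) by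
        rw [← pow_add, Nat.add_sub_cancel' (Nat.lt_succ_iff.mp hk)]]
      ring
    rw [Finset.sum_congr rfl this, ← Finset.sum_mul, SS_one, one_mul]
  rw [tsum_congr hterm, tsum_geometric_of_lt_one hq0.le hq1]

lemma L_pos {q : ℝ} (hq0 : 0 < q) (hq1 : q < 1) : 0 < ∑' k : ℕ, cc k * q ^ k := by
  have h := g_summable hq0 hq1
  have h0 : (1:ℝ) ≤ ∑' k : ℕ, cc k * q ^ k := by
    have := Summable.le_tsum h 0 (fun i _ => mul_nonneg (cc_pos i).le (by positivity))
    simpa [cc_zero] using this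
  linarith

lemma L_mul_sqrt {q : ℝ} (hq0 : 0 < q) (hq1 : q < 1) :
    (∑' k : ℕ, cc k * q ^ k) * Real.sqrt (1-q) = 1 := by
  set L := ∑' k : ℕ, cc k * q ^ k
  have hL := L_pos hq0 hq1
  have hq' : (0:ℝ) < 1 - q := by linarith
  have ht : Real.sqrt (1-q) ^ 2 = 1-q := Real.sq_sqrt hq'.le
  have ht0 : 0 < Real.sqrt (1-q) := Real.sqrt_pos.mpr hq'
  have h1 : (L * Real.sqrt (1-q))^2 = 1 := by
    rw [mul_pow, L_sq hq0 hq1, ht]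
    field_simp
  have h2 : (L * Real.sqrt (1-q) - 1) * (L * Real.sqrt (1-q) + 1) = 0 := by nlinarith [h1]
  rcases mul_eq_zero.mp h2 with h | h
  · linarith [sub_eq_zero.mp h]
  · nlinarith [mul_pos hL ht0]

lemma tsum_FF_eq {q : ℝ} (hq0 : 0 < q) (n : ℕ) :
    ∑' k, FF q n k = Real.sqrt (π * n) * ∑ k ∈ range (n+1), cc k * q^k * cc (n-k) := by
  rw [tsum_eq_sum (s := range (n+1)) (fun k hk => by
    rw [FF, if_neg]; simp only [Finset.mem_range] at hk; omega)]
  rw [Finset.mul_sum]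
  apply Finset.sum_congr rfl
  intro k hk
  simp only [Finset.mem_range] at hk
  rw [FF, if_pos (by omega : k ≤ n)]
  ring

lemma tsum_FF_tendsto {q : ℝ} (hq0 : 0 < q) (hq1 : q < 1) :
    Tendsto (fun n : ℕ => ∑' k, FF q n k) atTop (𝓝 (∑' k : ℕ, cc k * q ^ k)) := by
  apply tendsto_tsum_of_dominated_convergence (bnd_summable hq0 hq1) (FF_tendsto hq0 hq1)
  filter_upwards with n k
  rw [Real.norm_eq_abs]
  exact FF_le_bnd hq0 hq1 n k


theorem stmt10 (s a : PowerSeries ℝ)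
    (hs : s ^ 2 = 1 - 6 * X + X ^ 2)
    (hs0 : constantCoeff s = 1)
    (ha : s * a = 1) :
    Filter.Tendsto
      (fun n : ℕ =>
        coeff n a /
          ((3 - Real.sqrt 8) ^ (-(n : ℝ) - 1 / 2) * (2 * Real.sqrt 8) ^ (-(1 : ℝ) / 2) *
            (n : ℝ) ^ (-(1 : ℝ) / 2) / Real.sqrt Real.pi))
      Filter.atTop (nhds 1) := by
  have ha' : a = BB al * BB be := AA_eq_a s a hs hs0 ha
  have hbe := be_pos
  have hal := al_pos
  set q : ℝ := be ^ 2 with hqdef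
  have hq0 : 0 < q := by positivity
  have hbe1 : be < 1 := by unfold be; linarith [sqrt8_gt]
  have hq1 : q < 1 := by rw [hqdef]; nlinarith
  have hinv : al⁻¹ = be := inv_eq_of_mul_eq_one_right al_mul_be
  have halne : al ≠ 0 := ne_of_gt hal
  -- coefficient formula
  have hcoeff : ∀ n : ℕ, coeff n a = (∑ k ∈ range (n+1), cc k * q^k * cc (n-k)) * al^n := by
    intro n
    rw [ha', mul_comm (BB al) (BB be), PowerSeries.coeff_mul,
      Finset.Nat.sum_antidiagonal_eq_sum_range_succ_mk, Finset.sum_mul]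
    apply Finset.sum_congr rfl
    intro k hk
    simp only [Finset.mem_range] at hk
    have hkn : k ≤ n := Nat.lt_succ_iff.mp hk
    rw [BB, BB, PowerSeries.coeff_mk, PowerSeries.coeff_mk]
    have hpow : be^k * al^(n-k) = q^k * al^n := by
      rw [pow_sub₀ al halne hkn, hqdef, ← pow_mul]
      rw [show be ^ (2*k) = (be^2)^k by rw [pow_mul]]
      field_simp
      have h1 : be ^ k * al ^ k = 1 := by rw [← mul_pow, mul_comm be al, al_mul_be, one_pow]
      linear_combination (-(be^k)) * h1
    calc cc k * be ^ k * (cc (n-k) * al ^ (n-k))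
        = (cc k * cc (n-k)) * (be^k * al^(n-k)) := by ring
      _ = (cc k * cc (n-k)) * (q^k * al^n) := by rw [hpow]
      _ = cc k * q ^ k * cc (n-k) * al ^ n := by ring
  -- limit
  have hlim : Filter.Tendsto (fun n : ℕ => (∑' k, FF q n k) * Real.sqrt (1-q))
      Filter.atTop (nhds 1) := by
    have := (tsum_FF_tendsto hq0 hq1).mul_const (Real.sqrt (1-q))
    rwa [L_mul_sqrt hq0 hq1] at this
  apply Filter.Tendsto.congr' _ hlim
  filter_upwards [Filter.eventually_ge_atTop 1] with n hn
  have hnR : (0:ℝ) < n := by exact_mod_cast hn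
  have hsn : 0 < Real.sqrt n := Real.sqrt_pos.mpr hnR
  have hsπ : 0 < Real.sqrt π := Real.sqrt_pos.mpr Real.pi_pos
  have h8 : (0:ℝ) < Real.sqrt 8 := Real.sqrt_pos.mpr (by norm_num)
  have hsbe : 0 < Real.sqrt be := Real.sqrt_pos.mpr hbe
  have hs28 : 0 < Real.sqrt (2 * Real.sqrt 8) := Real.sqrt_pos.mpr (by linarith)
  -- identify the q between both sides
  have h1q : 1 - q = be * (2 * Real.sqrt 8) := by
    rw [hqdef]
    unfold be
    nlinarith [sqrt8_sq]
  -- rpow computations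
  have e1 : (3 - Real.sqrt 8) ^ (-(n : ℝ) - 1/2) = al ^ n / Real.sqrt be := by
    have hbase : (3 - Real.sqrt 8) = be := rfl
    rw [hbase, show (-(n:ℝ) - 1/2) = -((n:ℝ) + 1/2) by ring, Real.rpow_neg hbe.le,
      Real.rpow_add hbe, Real.rpow_natCast,
      show ((1:ℝ)/2) = 1/(2:ℝ) by norm_num, ← Real.sqrt_eq_rpow]
    rw [mul_inv, ← hinv, inv_pow, inv_inv]
    rw [div_eq_mul_inv]
  have e2 : (2 * Real.sqrt 8) ^ (-(1:ℝ)/2) = (Real.sqrt (2 * Real.sqrt 8))⁻¹ := by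
    rw [show (-(1:ℝ)/2) = -(1/2) by ring, Real.rpow_neg (by linarith), ← Real.sqrt_eq_rpow]
  have e3 : (n:ℝ) ^ (-(1:ℝ)/2) = (Real.sqrt n)⁻¹ := by
    rw [show (-(1:ℝ)/2) = -(1/2) by ring, Real.rpow_neg hnR.le, ← Real.sqrt_eq_rpow]
  rw [hcoeff n, tsum_FF_eq hq0 n, e1, e2, e3, sqrtpin]
  have hsplit : Real.sqrt (1-q) = Real.sqrt be * Real.sqrt (2 * Real.sqrt 8) := by
    rw [h1q, Real.sqrt_mul hbe.le]
  rw [hsplit]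
  have halp : (0:ℝ) < al ^ n := by positivity
  field_simp
end

section
/- For every n ≥ 1, the total number of ascents over all Schröder paths of semilength n equals the n-th coefficient of (x^2 - 5x + 2)/(2 sqrt(1 - 6x + x^2)) plus the n-th coefficient of (x+2)/2. -/
open PowerSeries

-- basic lemmas
@[simp] lemma pathLen_nil : pathLen [] = 0 := rfl
@[simp] lemma pathAlt_nil : pathAlt [] = 0 := rfl
@[simp] lemma pathLen_cons (x : Step) (l : List Step) :
    pathLen (x :: l) = x.len + pathLen l := by simp [pathLen]
@[simp] lemma pathAlt_cons (x : Step) (l : List Step) :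
    pathAlt (x :: l) = x.alt + pathAlt l := by simp [pathAlt]
@[simp] lemma pathLen_append (a b : List Step) :
    pathLen (a ++ b) = pathLen a + pathLen b := by simp [pathLen]
@[simp] lemma pathAlt_append (a b : List Step) :
    pathAlt (a ++ b) = pathAlt a + pathAlt b := by simp [pathAlt]

instance inst_s12 : Fintype Step :=
  ⟨⟨{Step.U, Step.D, Step.F}, by decide⟩, by intro x; cases x <;> decide⟩

lemma length_le_pathLen (w : List Step) : w.length ≤ pathLen w := by
  induction w with
  | nil => simp
  | cons x l ih => cases x <;> simp [Step.len] <;> omega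

lemma schroeder_finite (n : ℕ) : {w : List Step | IsSchroeder n w}.Finite := by
  apply Set.Finite.subset (List.finite_length_le Step (2 * n))
  intro w hw
  have := length_le_pathLen w
  have := hw.1
  simp only [Set.mem_setOf_eq]
  omega

noncomputable def S (n : ℕ) : Finset (List Step) := (schroeder_finite n).toFinset

lemma mem_S {n : ℕ} {w : List Step} : w ∈ S n ↔ IsSchroeder n w := by
  simp [S]

lemma parity_lemma (w : List Step) : Even ((pathLen w : ℤ) + pathAlt w) := by
  induction w with
  | nil => simp
  | cons x l ih =>
    rcases ih with ⟨m, hm⟩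
    cases x <;> simp [Step.len, Step.alt] <;>
      [exact ⟨m + 1, by push_cast; linarith⟩;
       exact ⟨m, by push_cast; linarith⟩;
       exact ⟨m + 1, by push_cast; linarith⟩]

@[simp] lemma ascents_nil : ascents [] = 0 := rfl

lemma ascents_cons (x : Step) (l : List Step) :
    ascents (x :: l) = (if x = Step.U ∧ l.head? ≠ some Step.U then 1 else 0) + ascents l := by
  unfold ascents
  rw [List.length_cons, List.range_succ_eq_map, List.countP_cons, List.countP_map]
  have hpred : ((fun i => decide ((x :: l)[i]? = some Step.U ∧ (x :: l)[i+1]? ≠ some Step.U)) ∘ Nat.succ)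
      = (fun i => decide (l[i]? = some Step.U ∧ l[i+1]? ≠ some Step.U)) := by
    funext i; simp
  rw [hpred]
  have h0 : l[0]? = l.head? := by cases l <;> simp
  by_cases h : x = Step.U ∧ l.head? ≠ some Step.U
  · simp [h0, h.1, h.2, Nat.add_comm]
  · rw [not_and_or] at h
    rcases h with h | h
    · simp [h0, h]
    · rw [not_not] at h
      simp [h0, h]

lemma ascents_append {q : List Step} (hq : q.head? ≠ some Step.U) (p : List Step) :
    ascents (p ++ q) = ascents p + ascents q := by
  induction p with
  | nil => simp
  | cons x p ih =>
    rw [List.cons_append, ascents_cons, ih, ascents_cons]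
    have : (p ++ q).head? ≠ some Step.U ↔ p.head? ≠ some Step.U := by
      cases p with
      | nil => simpa using hq
      | cons y t => simp
    by_cases hc : x = Step.U ∧ p.head? ≠ some Step.U
    · rw [if_pos hc, if_pos ⟨hc.1, this.mpr hc.2⟩]; omega
    · rw [not_and_or] at hc
      rcases hc with hc | hc
      · rw [if_neg (fun hh => hc hh.1), if_neg (fun hh => hc hh.1)]; omega
      · rw [not_not] at hc
        have hpq : (p ++ q).head? = some Step.U := by
          cases p with
          | nil => simp at hc
          | cons y t => simpa using hc
        rw [if_neg (fun hh => hh.2 hpq), if_neg (fun hh => hh.2 hc)]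
        omega

lemma unique_split {k k' : ℕ} {p p' q q' : List Step}
    (hp : IsSchroeder k p) (hp' : IsSchroeder k' p')
    (h : p ++ Step.D :: q = p' ++ Step.D :: q') : p = p' ∧ q = q' := by
  have key : ∀ {m m' : ℕ} {a a' b b' : List Step}, IsSchroeder m a → IsSchroeder m' a' →
      a ++ Step.D :: b = a' ++ Step.D :: b' → ¬ a.length < a'.length := by
    intro m m' a a' b b' ha ha' heq hlt
    have htake : (a ++ Step.D :: b).take (a.length + 1) = a ++ [Step.D] := by
      rw [List.take_append]
      simp
    have htake' : (a' ++ Step.D :: b').take (a.length + 1) = a'.take (a.length + 1) := by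
      rw [List.take_append]
      have : a.length + 1 - a'.length = 0 := by omega
      simp [this]
    have hpre : (a ++ [Step.D]) <+: a' := by
      rw [← htake, heq, htake']
      exact List.take_prefix _ _
    have := ha'.2.2 _ hpre
    simp [ha.2.1, Step.alt] at this
  have hlen : p.length = p'.length := by
    rcases Nat.lt_trichotomy p.length p'.length with hl | hl | hl
    · exact absurd hl (key hp hp' h)
    · exact hl
    · exact absurd hl (key hp' hp h.symm)
  obtain ⟨h1, h2⟩ := List.append_inj h hlen
  exact ⟨h1, by injection h2⟩

lemma isSchroeder_F_cons {n : ℕ} {q : List Step} (h : IsSchroeder n q) :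
    IsSchroeder (n + 1) (Step.F :: q) := by
  refine ⟨by simp [h.1, Step.len]; ring, by simp [h.2.1, Step.alt], ?_⟩
  intro pre hpre
  cases pre with
  | nil => simp
  | cons x t =>
    rw [List.cons_prefix_cons] at hpre
    have := h.2.2 t hpre.2
    simp [hpre.1, Step.alt]
    omega

lemma isSchroeder_UD {n k : ℕ} {p q : List Step} (hk : k ≤ n)
    (hp : IsSchroeder k p) (hq : IsSchroeder (n - k) q) :
    IsSchroeder (n + 1) (Step.U :: p ++ Step.D :: q) := by
  refine ⟨?_, ?_, ?_⟩
  · simp [hp.1, hq.1, Step.len]; omega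
  · simp [hp.2.1, hq.2.1, Step.alt]
  · intro pre hpre
    cases pre with
    | nil => simp
    | cons x t =>
      rw [show Step.U :: p ++ Step.D :: q = Step.U :: (p ++ Step.D :: q) from rfl,
        List.cons_prefix_cons] at hpre
      obtain ⟨hx, ht⟩ := hpre
      subst hx
      by_cases hl : t.length ≤ p.length
      · have htp : t <+: p :=
          List.prefix_of_prefix_length_le ht (List.prefix_append _ _) hl
        have := hp.2.2 t htp
        simp [Step.alt]; omega
      · have hpt : p <+: t :=
          List.prefix_of_prefix_length_le (List.prefix_append _ _) ht (by omega)
        obtain ⟨u, hu⟩ := hpt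
        have hu' : u <+: Step.D :: q := by
          rw [← hu, List.prefix_append_right_inj] at ht
          exact ht
        cases u with
        | nil => rw [List.append_nil] at hu; subst hu; omega
        | cons y u' =>
          rw [List.cons_prefix_cons] at hu'
          have hqpre := hq.2.2 u' hu'.2
          rw [← hu]
          simp [Step.alt, hp.2.1, hu'.1, Step.alt]
          omega

lemma schroeder_decomp {n : ℕ} {w : List Step} (h : IsSchroeder (n + 1) w) :
    (∃ q, IsSchroeder n q ∧ w = Step.F :: q) ∨
    (∃ k p q, k ≤ n ∧ IsSchroeder k p ∧ IsSchroeder (n - k) q ∧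
      w = Step.U :: p ++ Step.D :: q) := by
  classical
  cases w with
  | nil => exfalso; have := h.1; simp at this
  | cons x t =>
    cases x with
    | D =>
      exfalso
      have := h.2.2 [Step.D] ⟨t, rfl⟩
      simp [Step.alt] at this
    | F =>
      left
      refine ⟨t, ⟨?_, ?_, ?_⟩, rfl⟩
      · have := h.1; simp [Step.len] at this; omega
      · have := h.2.1; simp [Step.alt] at this; exact this
      · intro pre hpre
        have := h.2.2 (Step.F :: pre) (List.cons_prefix_cons.mpr ⟨rfl, hpre⟩)
        simpa [Step.alt] using this
    | U =>
      right
      have haltt : pathAlt t = -1 := by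
        have := h.2.1; simp [Step.alt] at this; linarith
      have htne : t ≠ [] := by
        intro h'; rw [h'] at haltt; simp at haltt
      have hlen1 : 1 ≤ t.length := List.length_pos_iff.mpr htne
      have hex : ∃ j, pathAlt (t.take (j + 1)) < 0 := by
        refine ⟨t.length - 1, ?_⟩
        rw [show t.length - 1 + 1 = t.length by omega, List.take_length, haltt]
        omega
      set j := Nat.find hex with hjdef
      have hjlt : pathAlt (t.take (j + 1)) < 0 := Nat.find_spec hex
      have hmin' : ∀ i, i ≤ j → 0 ≤ pathAlt (t.take i) := by
        intro i hi
        cases i with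
        | zero => simp
        | succ i' => exact le_of_not_gt (Nat.find_min hex (by omega))
      have hjlen : j < t.length := by
        have : j ≤ t.length - 1 := Nat.find_min' hex (by
          rw [show t.length - 1 + 1 = t.length by omega, List.take_length, haltt]; omega)
        omega
      have htj : t.take (j + 1) = t.take j ++ [t[j]] := by
        rw [List.take_succ]
        simp [List.getElem?_eq_getElem hjlen]
      have hsplit : pathAlt (t.take (j + 1)) = pathAlt (t.take j) + (t[j]).alt := by
        rw [htj, pathAlt_append, pathAlt_cons, pathAlt_nil]; ring
      have htj0 : 0 ≤ pathAlt (t.take j) := hmin' j le_rfl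
      have hD : t[j] = Step.D := by
        cases hc : t[j] <;> rw [hc] at hsplit <;> simp [Step.alt] at hsplit <;>
          first | rfl | omega
      have haltp : pathAlt (t.take j) = 0 := by
        rw [hD] at hsplit; simp [Step.alt] at hsplit; omega
      have haltpj : pathAlt (t.take (j + 1)) = -1 := by
        rw [hD] at hsplit; simp [Step.alt] at hsplit; omega
      set p := t.take j with hpdef
      set q := t.drop (j + 1) with hqdef
      have hteq : t = p ++ Step.D :: q := by
        conv_lhs => rw [← List.take_append_drop j t]
        rw [List.drop_eq_getElem_cons hjlen, hD]
      have haltq : pathAlt q = 0 := by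
        rw [hteq] at haltt
        simp [Step.alt, haltp] at haltt
        linarith
      have hlent : pathLen (Step.U :: t) = 2 * (n + 1) := h.1
      have hlent2 : pathLen t = pathLen p + 1 + pathLen q := by
        rw [hteq]; simp [Step.len]; ring
      have hevenp : Even (pathLen p) := by
        have hpar := parity_lemma p
        rw [haltp, add_zero] at hpar
        exact_mod_cast hpar
      obtain ⟨k, hk2⟩ := hevenp
      have hsums : 1 + pathLen t = 2 * (n + 1) := by
        simpa [Step.len] using hlent
      refine ⟨k, p, q, by omega, ⟨by omega, haltp, ?_⟩, ⟨by omega, haltq, ?_⟩, by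
        rw [List.cons_append, ← hteq]⟩
      · intro pre hpre
        have hpl : pre.length ≤ j := by
          have := hpre.length_le
          rw [hpdef, List.length_take] at this
          omega
        have : pre = t.take pre.length :=
          List.prefix_iff_eq_take.mp (hpre.trans (hpdef ▸ List.take_prefix j t))
        have h2 := hmin' pre.length hpl
        rw [← this] at h2
        exact h2
      · intro pre hpre
        have hw : (Step.U :: (p ++ Step.D :: pre)) <+: Step.U :: t := by
          rw [List.cons_prefix_cons]
          refine ⟨rfl, ?_⟩
          rw [hteq]
          obtain ⟨r, hr⟩ := hpre
          exact ⟨r, by rw [← hr]; simp⟩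
        have := h.2.2 _ hw
        simp [Step.alt, haltp] at this
        linarith

noncomputable def T (n : ℕ) : Finset (Σ _ : ℕ, List Step × List Step) :=
  (Finset.range (n + 1)).sigma (fun k => (S k) ×ˢ (S (n - k)))

def g : (Σ _ : ℕ, List Step × List Step) → List Step :=
  fun x => Step.U :: x.2.1 ++ Step.D :: x.2.2

lemma S_succ_eq (n : ℕ) :
    S (n + 1) = (S n).image (Step.F :: ·) ∪ (T n).image g := by
  ext w
  simp only [Finset.mem_union, Finset.mem_image, T, Finset.mem_sigma,
    Finset.mem_range, Finset.mem_product, g]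
  constructor
  · intro hw
    rcases schroeder_decomp (mem_S.mp hw) with ⟨q, hq, rfl⟩ | ⟨k, p, q, hk, hp, hq, rfl⟩
    · exact Or.inl ⟨q, mem_S.mpr hq, rfl⟩
    · refine Or.inr ⟨⟨k, p, q⟩, ⟨?_, ?_, ?_⟩, rfl⟩
      · show k < n + 1; omega
      · show p ∈ S k; exact mem_S.mpr hp
      · show q ∈ S (n - k); exact mem_S.mpr hq
  · rintro (⟨q, hq, rfl⟩ | ⟨⟨k, p, q⟩, ⟨hk, hp, hq⟩, rfl⟩)
    · exact mem_S.mpr (isSchroeder_F_cons (mem_S.mp hq))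
    · have hk' : k < n + 1 := hk
      have hp' : p ∈ S k := hp
      have hq' : q ∈ S (n - k) := hq
      exact mem_S.mpr (isSchroeder_UD (by omega) (mem_S.mp hp') (mem_S.mp hq'))

lemma g_injOn {n : ℕ} : ∀ x ∈ T n, ∀ y ∈ T n, g x = g y → x = y := by
  rintro ⟨k, p, q⟩ hx ⟨k', p', q'⟩ hy hg
  simp only [T, Finset.mem_sigma, Finset.mem_range, Finset.mem_product] at hx hy
  simp only [g, List.cons_append, List.cons.injEq, true_and] at hg
  obtain ⟨hp, hq⟩ := unique_split (mem_S.mp hx.2.1) (mem_S.mp hy.2.1) hg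
  have hk : k = k' := by
    have h1 := (mem_S.mp hx.2.1).1
    have h2 := (mem_S.mp hy.2.1).1
    rw [hp] at h1; omega
  subst hk; subst hp; subst hq; rfl

lemma sum_S_succ {M : Type*} [AddCommMonoid M] (f : List Step → M) (n : ℕ) :
    ∑ w ∈ S (n + 1), f w = (∑ q ∈ S n, f (Step.F :: q)) +
      ∑ k ∈ Finset.range (n + 1), ∑ p ∈ S k, ∑ q ∈ S (n - k),
        f (Step.U :: p ++ Step.D :: q) := by
  classical
  have hdisj : Disjoint ((S n).image (Step.F :: ·)) ((T n).image g) := by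
    rw [Finset.disjoint_left]
    rintro a ha hb
    obtain ⟨q, _, rfl⟩ := Finset.mem_image.mp ha
    obtain ⟨⟨k, p, q'⟩, _, hg⟩ := Finset.mem_image.mp hb
    simp [g] at hg
  rw [S_succ_eq, Finset.sum_union hdisj,
    Finset.sum_image (fun x _ y _ h => by injection h),
    Finset.sum_image g_injOn]
  congr 1
  rw [T, Finset.sum_sigma]
  exact Finset.sum_congr rfl fun k _ => Finset.sum_product _ _ _

noncomputable def r (n : ℕ) : ℕ := (S n).card
noncomputable def a (n : ℕ) : ℕ := ∑ w ∈ S n, ascents w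
noncomputable def c (n : ℕ) : ℕ :=
  ((S n).filter (fun w => w.head? ≠ some Step.U)).card

lemma S_zero : S 0 = {([] : List Step)} := by
  ext w
  simp only [mem_S, Finset.mem_singleton]
  constructor
  · intro hw
    cases w with
    | nil => rfl
    | cons x t => exfalso; have := hw.1; cases x <;> simp [Step.len] at this
  · rintro rfl
    exact ⟨by simp, by simp, fun p hp => by rw [List.prefix_nil.mp hp]; simp⟩

@[simp] lemma r_zero : r 0 = 1 := by simp [r, S_zero]
@[simp] lemma a_zero : a 0 = 0 := by simp [a, S_zero]
@[simp] lemma c_zero : c 0 = 1 := by simp [c, S_zero, Finset.filter_singleton]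

lemma r_succ (n : ℕ) :
    r (n + 1) = r n + ∑ k ∈ Finset.range (n + 1), r k * r (n - k) := by
  have h := sum_S_succ (fun _ => (1 : ℕ)) n
  simp only [Finset.sum_const, smul_eq_mul, mul_one] at h
  simpa [r] using h

lemma c_succ (n : ℕ) : c (n + 1) = r n := by
  have himg : (S (n + 1)).filter (fun w => w.head? ≠ some Step.U)
      = (S n).image (Step.F :: ·) := by
    ext w
    simp only [Finset.mem_filter, S_succ_eq, Finset.mem_union, Finset.mem_image]
    constructor
    · rintro ⟨hw | hw, hh⟩
      · exact hw
      · exfalso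
        obtain ⟨x, _, rfl⟩ := hw
        simp [g] at hh
    · rintro ⟨q, hq, rfl⟩
      exact ⟨Or.inl ⟨q, hq, rfl⟩, by simp⟩
  rw [c, himg, Finset.card_image_of_injective _ (fun x y h => by injection h)]
  rfl

lemma ascents_F_cons (q : List Step) : ascents (Step.F :: q) = ascents q := by
  rw [ascents_cons]; simp

lemma ascents_UD (p q : List Step) : ascents (Step.U :: p ++ Step.D :: q) =
    ((if p.head? ≠ some Step.U then 1 else 0) + ascents p) + ascents q := by
  rw [List.cons_append, ascents_cons, ascents_append (q := Step.D :: q) (by simp) p,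
    ascents_cons, if_neg (fun hh : Step.D = Step.U ∧ q.head? ≠ some Step.U => Step.noConfusion hh.1)]
  have hind : ((p ++ Step.D :: q).head? ≠ some Step.U) ↔ (p.head? ≠ some Step.U) := by
    cases p with
    | nil => simp
    | cons y t => simp
  by_cases hp : p.head? ≠ some Step.U
  · rw [if_pos ⟨rfl, hind.mpr hp⟩, if_pos hp]
    omega
  · rw [if_neg (fun hh => hp (hind.mp hh.2)), if_neg hp]
    omega

lemma a_succ (n : ℕ) : a (n + 1) =
    a n + ∑ k ∈ Finset.range (n + 1),
      (c k * r (n - k) + a k * r (n - k) + r k * a (n - k)) := by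
  have hsum := sum_S_succ ascents n
  rw [show a (n + 1) = ∑ w ∈ S (n + 1), ascents w from rfl, hsum]
  congr 1
  · rw [Finset.sum_congr rfl fun q _ => ascents_F_cons q]; rfl
  · apply Finset.sum_congr rfl
    intro k _
    have h1 : ∀ p, ∑ q ∈ S (n - k), ascents (Step.U :: p ++ Step.D :: q)
        = ((if p.head? ≠ some Step.U then 1 else 0) + ascents p) * r (n - k)
          + a (n - k) := by
      intro p
      rw [Finset.sum_congr rfl fun q _ => ascents_UD p q, Finset.sum_add_distrib,
        Finset.sum_const, smul_eq_mul, mul_comm]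
      rfl
    rw [Finset.sum_congr rfl fun p _ => h1 p, Finset.sum_add_distrib,
      Finset.sum_const, smul_eq_mul, ← Finset.sum_mul, Finset.sum_add_distrib]
    have hc : ∑ p ∈ S k, (if p.head? ≠ some Step.U then 1 else 0) = c k :=
      (Finset.card_filter _ _).symm
    rw [hc]
    show (c k + a k) * r (n - k) + r k * a (n - k) = _
    ring

noncomputable def Rs : PowerSeries ℚ := PowerSeries.mk fun n => (r n : ℚ)
noncomputable def As : PowerSeries ℚ := PowerSeries.mk fun n => (a n : ℚ)
noncomputable def Cs : PowerSeries ℚ := PowerSeries.mk fun n => (c n : ℚ)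

lemma hRs : Rs = 1 + X * Rs + X * (Rs * Rs) := by
  ext n
  cases n with
  | zero =>
    simp [Rs, coeff_zero_eq_constantCoeff, map_add, map_mul, constantCoeff_X]
  | succ n =>
    rw [map_add, map_add, coeff_succ_X_mul, coeff_succ_X_mul, coeff_one,
      if_neg (Nat.succ_ne_zero n), coeff_mul,
      Finset.Nat.sum_antidiagonal_eq_sum_range_succ_mk]
    simp only [Rs, coeff_mk]
    rw [show ((r (n+1) : ℚ)) = ((r n : ℚ)) + ∑ k ∈ Finset.range (n+1), (r k : ℚ) * (r (n-k) : ℚ) by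
      push_cast [r_succ n]; norm_num]
    ring

lemma hCs : Cs = 1 + X * Rs := by
  ext n
  cases n with
  | zero =>
    simp [Cs, coeff_zero_eq_constantCoeff, map_add, map_mul, constantCoeff_X]
  | succ n =>
    rw [map_add, coeff_succ_X_mul, coeff_one, if_neg (Nat.succ_ne_zero n)]
    simp [Cs, Rs, c_succ]

lemma hAs : As = X * As + X * (As * Rs) + X * (Rs * As) + X * (Cs * Rs) := by
  ext n
  cases n with
  | zero =>
    simp [As, coeff_zero_eq_constantCoeff, map_add, map_mul, constantCoeff_X]
  | succ n =>
    rw [map_add, map_add, map_add, coeff_succ_X_mul, coeff_succ_X_mul,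
      coeff_succ_X_mul, coeff_succ_X_mul, coeff_mul, coeff_mul, coeff_mul,
      Finset.Nat.sum_antidiagonal_eq_sum_range_succ_mk,
      Finset.Nat.sum_antidiagonal_eq_sum_range_succ_mk,
      Finset.Nat.sum_antidiagonal_eq_sum_range_succ_mk]
    simp only [As, Rs, Cs, coeff_mk]
    rw [show ((a (n+1) : ℚ)) = (a n : ℚ)
        + ∑ k ∈ Finset.range (n+1), (a k : ℚ) * (r (n-k) : ℚ)
        + ∑ k ∈ Finset.range (n+1), (r k : ℚ) * (a (n-k) : ℚ)
        + ∑ k ∈ Finset.range (n+1), (c k : ℚ) * (r (n-k) : ℚ) by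
      push_cast [a_succ n, Finset.sum_add_distrib]; ring]

theorem stmt12 (s D : PowerSeries ℚ)
    (hs : s ^ 2 = 1 - 6 * X + X ^ 2)
    (hs0 : constantCoeff s = 1)
    (hD : 2 * s * D = X ^ 2 - 5 * X + 2) :
    ∀ n : ℕ, 1 ≤ n →
      (totalAscents n : ℚ) =
        coeff n D + coeff n (PowerSeries.C (1 / 2 : ℚ) * (X + 2)) := by
  intro n hn
  have hta : (totalAscents n : ℚ) = (a n : ℚ) := by
    have hset : {w : List Step | IsSchroeder n w} = ↑(S n) := by
      ext w; simp [mem_S]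
    have : totalAscents n = a n := by
      rw [totalAscents, hset, finsum_mem_coe_finset]; rfl
    rw [this]
  set σ : PowerSeries ℚ := 1 - X - 2 * X * Rs with hσ
  have hsq : σ ^ 2 = 1 - 6 * X + X ^ 2 := by
    rw [hσ]
    linear_combination (-4 * (X : PowerSeries ℚ)) * hRs
  have h1 : (σ - s) * (σ + s) = 0 := by linear_combination hsq - hs
  have h2 : σ = s := by
    rcases mul_eq_zero.mp h1 with h | h
    · exact sub_eq_zero.mp h
    · exfalso
      have hc := congrArg (constantCoeff) h
      simp [hσ, map_add, map_sub, map_mul, constantCoeff_X, hs0] at hc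
  have hkey : 2 * s * As = X ^ 2 - 5 * X + 2 - (2 - X) * s := by
    rw [← h2, hσ]
    linear_combination 2 * hAs + (2 * X * Rs) * hCs - (2 * X) * hRs
  have hzero : s * (2 * As - 2 * D + 2 - X) = 0 := by
    linear_combination hkey - hD
  have hs_ne : s ≠ 0 := fun h => by rw [h] at hs0; simp at hs0
  have hlin : 2 * As - 2 * D + 2 - X = 0 :=
    (mul_eq_zero.mp hzero).resolve_left hs_ne
  have hcoeff := congrArg (coeff n) hlin
  have h2mul : ∀ f : PowerSeries ℚ, coeff n (2 * f) = 2 * coeff n f := by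
    intro f; rw [two_mul, map_add, two_mul]
  have h2c : coeff n (2 : PowerSeries ℚ) = 0 := by
    rw [show (2 : PowerSeries ℚ) = 1 + 1 by norm_num, map_add, coeff_one,
      if_neg (by omega : ¬ n = 0)]
    norm_num
  simp only [map_sub, map_add, map_zero, h2mul, h2c] at hcoeff
  have hAn : coeff n As = (a n : ℚ) := coeff_mk n _
  rw [hAn] at hcoeff
  rw [hta, coeff_C_mul, map_add, h2c, add_zero]
  linarith [hcoeff]
end
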